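/- Let S be a semigroup, σ : S → S an involutive automorphism, and μ a finite linear combination of Dirac measures at central points, given by a finite index set I, constants c_i ∈ ℂ, and elements z_i ∈ Z(S). Suppose f, g : S → ℂ satisfy ∑_{i∈I} c_i f(x y z_i) + ∑_{i∈I} c_i f(σ(y) x z_i) = 2 f(x) g(y) for all x, y ∈ S, with f ≠ 0 and g ≠ 0, and suppose ∑_{i∈I} c_i g(z_i) = 0. Then there exists a constant λ₁ ∈ ℂ \ {0} such that ∑_{i∈I} c_i f(x z_i) = λ₁ f(x) for all x ∈ S. -/

import Mathlib

/-- Auxiliary lemma: from a Kannappan–Wilson type identity for `u` one derives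
the same identity for `U = ∑ᵢ cᵢ u(· zᵢ)`, an "odd"-type identity, and a
sine-type identity. -/
theorem kw_aux {S : Type*} [Semigroup S] (σ : S → S)
    (hσmul : ∀ x y : S, σ (x * y) = σ x * σ y)
    {ι : Type*} [Fintype ι] (c : ι → ℂ) (z : ι → S)
    (hz : ∀ (i : ι) (x : S), x * z i = z i * x)
    (hzσ : ∀ (i : ι) (x : S), x * σ (z i) = σ (z i) * x)
    (u g U : S → ℂ)
    (hU : ∀ w : S, U w = ∑ j, c j * u (w * z j))
    (hequ : ∀ x y : S,
      (∑ i, c i * u (x * y * z i)) + (∑ i, c i * u (σ y * x * z i)) = 2 * u x * g y)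
    (hgz : (∑ i, c i * g (z i)) = 0) :
    (∀ x y : S, (∑ i, c i * U (x * y * z i)) + (∑ i, c i * U (σ y * x * z i)) = 2 * U x * g y)
    ∧ (∀ x : S, (∑ i, c i * U (σ (z i) * x)) = -(∑ i, c i * U (x * z i)))
    ∧ (∀ x y : S, (∑ i, c i * U (x * y * z i)) - (∑ i, c i * U (σ y * x * z i))
        = 2 * u x * (∑ i, c i * g (y * z i))) := by
  have e1 : ∀ (a b : S) (i : ι), a * z i * b = a * b * z i := fun a b i => by
    rw [mul_assoc, ← hz i b, ← mul_assoc]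
  have hb : ∀ x : S, (∑ i, c i * U (σ (z i) * x)) = -(∑ i, c i * U (x * z i)) := by
    intro x
    have H : ∑ i, c i * (U (x * z i) + U (σ (z i) * x)) = ∑ i, c i * (2 * u x * g (z i)) :=
      Finset.sum_congr rfl fun i _ => by rw [hU (x * z i), hU (σ (z i) * x), hequ x (z i)]
    have HL : ∑ i, c i * (U (x * z i) + U (σ (z i) * x))
        = (∑ i, c i * U (x * z i)) + (∑ i, c i * U (σ (z i) * x)) := by
      calc ∑ i, c i * (U (x * z i) + U (σ (z i) * x))
          = ∑ i, (c i * U (x * z i) + c i * U (σ (z i) * x)) :=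
            Finset.sum_congr rfl fun i _ => by ring
        _ = _ := Finset.sum_add_distrib
    have HR : ∑ i, c i * (2 * u x * g (z i)) = (2 * u x) * (∑ i, c i * g (z i)) := by
      calc ∑ i, c i * (2 * u x * g (z i))
          = ∑ i, (2 * u x) * (c i * g (z i)) := Finset.sum_congr rfl fun i _ => by ring
        _ = _ := by rw [Finset.mul_sum]
    rw [HL, HR, hgz, mul_zero] at H
    linear_combination H
  refine ⟨?_, hb, ?_⟩
  · intro x y
    have l1 : ∀ i, U (x * y * z i) = ∑ j, c j * u (x * z i * y * z j) := fun i => by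
      rw [hU]
      exact Finset.sum_congr rfl fun j _ => by rw [e1 x y i]
    have l2 : ∀ i, U (σ y * x * z i) = ∑ j, c j * u (σ y * (x * z i) * z j) := fun i => by
      rw [hU]
      exact Finset.sum_congr rfl fun j _ => by rw [← mul_assoc (σ y) x (z i)]
    have H : ∑ i, c i * ((∑ j, c j * u (x * z i * y * z j)) + (∑ j, c j * u (σ y * (x * z i) * z j)))
        = ∑ i, c i * (2 * u (x * z i) * g y) :=
      Finset.sum_congr rfl fun i _ => by rw [hequ (x * z i) y]
    have HL : ∑ i, c i * ((∑ j, c j * u (x * z i * y * z j)) + (∑ j, c j * u (σ y * (x * z i) * z j)))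
        = (∑ i, c i * U (x * y * z i)) + (∑ i, c i * U (σ y * x * z i)) := by
      calc ∑ i, c i * ((∑ j, c j * u (x * z i * y * z j)) + (∑ j, c j * u (σ y * (x * z i) * z j)))
          = ∑ i, (c i * U (x * y * z i) + c i * U (σ y * x * z i)) :=
            Finset.sum_congr rfl fun i _ => by rw [l1 i, l2 i]; ring
        _ = _ := Finset.sum_add_distrib
    have HR : ∑ i, c i * (2 * u (x * z i) * g y) = (2 * g y) * (∑ i, c i * u (x * z i)) := by
      calc ∑ i, c i * (2 * u (x * z i) * g y)
          = ∑ i, (2 * g y) * (c i * u (x * z i)) := Finset.sum_congr rfl fun i _ => by ring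
        _ = _ := by rw [Finset.mul_sum]
    rw [HL, HR] at H
    rw [hU x]
    linear_combination H
  · intro x y
    have l1 : ∀ i, U (x * y * z i) = ∑ j, c j * u (x * (y * z i) * z j) := fun i => by
      rw [hU]
      exact Finset.sum_congr rfl fun j _ => by rw [← mul_assoc x y (z i)]
    have l2 : ∀ i, U (σ (z i) * (σ y * x)) = ∑ j, c j * u (σ (y * z i) * x * z j) := fun i => by
      rw [hU]
      refine Finset.sum_congr rfl fun j _ => ?_
      have harg : σ (y * z i) * x = σ (z i) * (σ y * x) := by
        rw [hσmul, hzσ i (σ y), mul_assoc]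
      rw [harg]
    have H : ∑ i, c i * ((∑ j, c j * u (x * (y * z i) * z j)) + (∑ j, c j * u (σ (y * z i) * x * z j)))
        = ∑ i, c i * (2 * u x * g (y * z i)) :=
      Finset.sum_congr rfl fun i _ => by rw [hequ x (y * z i)]
    have HL : ∑ i, c i * ((∑ j, c j * u (x * (y * z i) * z j)) + (∑ j, c j * u (σ (y * z i) * x * z j)))
        = (∑ i, c i * U (x * y * z i)) + (∑ i, c i * U (σ (z i) * (σ y * x))) := by
      calc ∑ i, c i * ((∑ j, c j * u (x * (y * z i) * z j)) + (∑ j, c j * u (σ (y * z i) * x * z j)))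
          = ∑ i, (c i * U (x * y * z i) + c i * U (σ (z i) * (σ y * x))) :=
            Finset.sum_congr rfl fun i _ => by rw [l1 i, l2 i]; ring
        _ = _ := Finset.sum_add_distrib
    have HR : ∑ i, c i * (2 * u x * g (y * z i)) = (2 * u x) * (∑ i, c i * g (y * z i)) := by
      calc ∑ i, c i * (2 * u x * g (y * z i))
          = ∑ i, (2 * u x) * (c i * g (y * z i)) := Finset.sum_congr rfl fun i _ => by ring
        _ = _ := by rw [Finset.mul_sum]
    rw [HL, HR] at H
    linear_combination H - hb (σ y * x)

/-- Lemma: if `(f, g)` solves the Kannappan–Wilson equation with `f ≠ 0`, `g ≠ 0`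
and `∑ᵢ cᵢ g(zᵢ) = 0`, then there is a nonzero constant `λ₁` with
`∑ᵢ cᵢ f(x zᵢ) = λ₁ f(x)` for all `x`. -/
theorem kannappan_wilson_eigen {S : Type*} [Semigroup S] (σ : S → S)
    (hσmul : ∀ x y : S, σ (x * y) = σ x * σ y) (hσinv : ∀ x : S, σ (σ x) = x)
    {ι : Type*} [Fintype ι] (c : ι → ℂ) (z : ι → S)
    (hz : ∀ (i : ι) (x : S), x * z i = z i * x)
    (f g : S → ℂ) (hf : f ≠ 0) (hg : g ≠ 0)
    (heq : ∀ x y : S,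
      (∑ i, c i * f (x * y * z i)) + (∑ i, c i * f (σ y * x * z i)) = 2 * f x * g y)
    (hgz : (∑ i, c i * g (z i)) = 0) :
    ∃ lam₁ : ℂ, lam₁ ≠ 0 ∧ ∀ x : S, (∑ i, c i * f (x * z i)) = lam₁ * f x := by
  have hzσ : ∀ (i : ι) (x : S), x * σ (z i) = σ (z i) * x := by
    intro i x
    calc x * σ (z i) = σ (σ x) * σ (z i) := by rw [hσinv]
      _ = σ (σ x * z i) := (hσmul _ _).symm
      _ = σ (z i * σ x) := by rw [hz]
      _ = σ (z i) * σ (σ x) := hσmul _ _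
      _ = σ (z i) * x := by rw [hσinv]
  obtain ⟨y₀, hy₀⟩ : ∃ y : S, g y ≠ 0 := by
    by_contra hcon
    push_neg at hcon
    exact hg (funext fun y => hcon y)
  obtain ⟨x₁, hx₁⟩ : ∃ x : S, f x ≠ 0 := by
    by_contra hcon
    push_neg at hcon
    exact hf (funext fun x => hcon x)
  obtain ⟨F, hUF⟩ : ∃ F : S → ℂ, ∀ w : S, F w = ∑ j, c j * f (w * z j) := ⟨_, fun _ => rfl⟩
  obtain ⟨TF, hUTF⟩ : ∃ TF : S → ℂ, ∀ w : S, TF w = ∑ j, c j * F (w * z j) := ⟨_, fun _ => rfl⟩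
  obtain ⟨haF, hbF, hcF⟩ := kw_aux σ hσmul c z hz hzσ f g F hUF heq hgz
  obtain ⟨haFF, hbFF, hcFF⟩ := kw_aux σ hσmul c z hz hzσ F g TF hUTF haF hgz
  have d1F : ∀ x y : S, (∑ i, c i * F (x * y * z i))
      = F x * g y + f x * (∑ i, c i * g (y * z i)) := fun x y => by
    linear_combination (haF x y + hcF x y) / 2
  have d2F : ∀ x y : S, (∑ i, c i * F (σ y * x * z i))
      = F x * g y - f x * (∑ i, c i * g (y * z i)) := fun x y => by
    linear_combination (haF x y - hcF x y) / 2
  have d1FF : ∀ x y : S, (∑ i, c i * TF (x * y * z i))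
      = TF x * g y + F x * (∑ i, c i * g (y * z i)) := fun x y => by
    linear_combination (haFF x y + hcFF x y) / 2
  have hFeq : ∀ x y : S, F (x * y) + F (σ y * x) = 2 * f x * g y := fun x y => by
    rw [hUF (x * y), hUF (σ y * x)]
    exact heq x y
  -- key identity: TF(x) g(y) = f(x) * T²g(y)
  have star : ∀ x y : S, TF x * g y
      = f x * (∑ i, c i * (∑ j, c j * g (y * z i * z j))) := by
    intro x y
    have B : (∑ i, c i * TF (x * y * z i))
        = F x * (∑ i, c i * g (y * z i)) + f x * (∑ i, c i * (∑ j, c j * g (y * z i * z j))) := by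
      calc (∑ i, c i * TF (x * y * z i))
          = ∑ i, (F x * (c i * g (y * z i)) + f x * (c i * (∑ j, c j * g (y * z i * z j)))) := by
            refine Finset.sum_congr rfl fun i _ => ?_
            rw [mul_assoc x y (z i), hUTF (x * (y * z i)), d1F x (y * z i)]
            ring
        _ = (∑ i, F x * (c i * g (y * z i)))
            + (∑ i, f x * (c i * (∑ j, c j * g (y * z i * z j)))) := Finset.sum_add_distrib
        _ = F x * (∑ i, c i * g (y * z i))
            + f x * (∑ i, c i * (∑ j, c j * g (y * z i * z j))) := by
            rw [← Finset.mul_sum, ← Finset.mul_sum]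
    linear_combination B - d1FF x y
  -- "odd" part: ∑ c j f(σ(z j) x) = -F x
  have hh : ∀ x : S, (∑ j, c j * f (σ (z j) * x)) = - F x := by
    intro x
    have l3 : ∀ j : ι, (∑ i, c i * f (σ (z j) * x * y₀ * z i)) = F (σ (z j) * (x * y₀)) :=
      fun j => by
        rw [hUF]
        exact Finset.sum_congr rfl fun i _ => by rw [mul_assoc (σ (z j)) x y₀]
    have l4 : ∀ j : ι, (∑ i, c i * f (σ y₀ * (σ (z j) * x) * z i)) = F (σ (z j) * (σ y₀ * x)) :=
      fun j => by
        rw [hUF]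
        refine Finset.sum_congr rfl fun i _ => ?_
        have harg : σ y₀ * (σ (z j) * x) = σ (z j) * (σ y₀ * x) := by
          rw [← mul_assoc, hzσ j (σ y₀), mul_assoc]
        rw [harg]
    have H : ∑ j, c j * (F (σ (z j) * (x * y₀)) + F (σ (z j) * (σ y₀ * x)))
        = ∑ j, c j * (2 * f (σ (z j) * x) * g y₀) :=
      Finset.sum_congr rfl fun j _ => by rw [← l3 j, ← l4 j, heq (σ (z j) * x) y₀]
    have HL : ∑ j, c j * (F (σ (z j) * (x * y₀)) + F (σ (z j) * (σ y₀ * x)))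
        = (∑ j, c j * F (σ (z j) * (x * y₀))) + (∑ j, c j * F (σ (z j) * (σ y₀ * x))) := by
      calc ∑ j, c j * (F (σ (z j) * (x * y₀)) + F (σ (z j) * (σ y₀ * x)))
          = ∑ j, (c j * F (σ (z j) * (x * y₀)) + c j * F (σ (z j) * (σ y₀ * x))) :=
            Finset.sum_congr rfl fun j _ => by ring
        _ = _ := Finset.sum_add_distrib
    have HR : ∑ j, c j * (2 * f (σ (z j) * x) * g y₀)
        = (2 * g y₀) * (∑ j, c j * f (σ (z j) * x)) := by
      calc ∑ j, c j * (2 * f (σ (z j) * x) * g y₀)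
          = ∑ j, (2 * g y₀) * (c j * f (σ (z j) * x)) := Finset.sum_congr rfl fun j _ => by ring
        _ = _ := by rw [Finset.mul_sum]
    rw [HL, HR] at H
    have key : ((∑ j, c j * f (σ (z j) * x)) + F x) * g y₀ = 0 := by
      linear_combination (hbF (x * y₀) + hbF (σ y₀ * x) - H - haF x y₀) / 2
    have h6 := (mul_eq_zero.mp key).resolve_right hy₀
    linear_combination h6
  -- TF is not identically zero
  obtain ⟨x₂, hx₂⟩ : ∃ w : S, TF w ≠ 0 := by
    by_contra hcon
    push_neg at hcon
    have hF0 : ∀ x : S, F x = 0 := by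
      intro x
      have h1 := d1F x y₀
      have h2 := d2F x y₀
      have z1 : (∑ i, c i * F (x * y₀ * z i)) = 0 := by
        rw [← hUTF (x * y₀)]; exact hcon _
      have z2 : (∑ i, c i * F (σ y₀ * x * z i)) = 0 := by
        rw [← hUTF (σ y₀ * x)]; exact hcon _
      have h3 : F x * g y₀ = 0 := by linear_combination (z1 + z2 - h1 - h2) / 2
      exact (mul_eq_zero.mp h3).resolve_right hy₀
    have h4 := hFeq x₁ y₀
    rw [hF0 (x₁ * y₀), hF0 (σ y₀ * x₁)] at h4
    have h5 : f x₁ * g y₀ = 0 := by linear_combination -h4 / 2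
    exact hx₁ ((mul_eq_zero.mp h5).resolve_right hy₀)
  have hTG : (∑ i, c i * (∑ j, c j * g (y₀ * z i * z j))) ≠ 0 := by
    intro h0
    have hs := star x₂ y₀
    rw [h0, mul_zero] at hs
    exact mul_ne_zero hx₂ hy₀ hs
  obtain ⟨κ, hκdef⟩ : ∃ k : ℂ, k = (∑ i, c i * (∑ j, c j * g (y₀ * z i * z j))) / g y₀ :=
    ⟨_, rfl⟩
  have hκ : κ ≠ 0 := by rw [hκdef]; exact div_ne_zero hTG hy₀
  have hTFκ : ∀ w : S, TF w = κ * f w := by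
    intro w
    rw [hκdef, div_mul_eq_mul_div, eq_div_iff hy₀]
    linear_combination star w y₀
  have hperj : ∀ (x : S) (j : ι), κ * f (σ (z j) * x)
      = F x * g (z j) - f x * (∑ i, c i * g (z j * z i)) := by
    intro x j
    have hd := d2F x (z j)
    rw [← hUTF (σ (z j) * x), hTFκ (σ (z j) * x)] at hd
    exact hd
  obtain ⟨E, hEdef⟩ : ∃ E : ℂ, E = ∑ j, c j * (∑ i, c i * g (z j * z i)) := ⟨_, rfl⟩
  have hdia : ∀ x : S, κ * F x = f x * E := by
    intro x
    have H : ∑ j, c j * (κ * f (σ (z j) * x))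
        = ∑ j, c j * (F x * g (z j) - f x * (∑ i, c i * g (z j * z i))) :=
      Finset.sum_congr rfl fun j _ => by rw [hperj x j]
    have HL : ∑ j, c j * (κ * f (σ (z j) * x)) = κ * (∑ j, c j * f (σ (z j) * x)) := by
      calc ∑ j, c j * (κ * f (σ (z j) * x))
          = ∑ j, κ * (c j * f (σ (z j) * x)) := Finset.sum_congr rfl fun j _ => by ring
        _ = _ := by rw [Finset.mul_sum]
    have HR : ∑ j, c j * (F x * g (z j) - f x * (∑ i, c i * g (z j * z i)))
        = F x * (∑ j, c j * g (z j)) - f x * (∑ j, c j * (∑ i, c i * g (z j * z i))) := by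
      calc ∑ j, c j * (F x * g (z j) - f x * (∑ i, c i * g (z j * z i)))
          = ∑ j, (F x * (c j * g (z j)) - f x * (c j * (∑ i, c i * g (z j * z i)))) :=
            Finset.sum_congr rfl fun j _ => by ring
        _ = (∑ j, F x * (c j * g (z j)))
            - (∑ j, f x * (c j * (∑ i, c i * g (z j * z i)))) := Finset.sum_sub_distrib _ _
        _ = _ := by rw [← Finset.mul_sum, ← Finset.mul_sum]
    rw [HL, HR, hgz, mul_zero, hh x, ← hEdef] at H
    linear_combination -H
  obtain ⟨x₃, hx₃⟩ : ∃ w : S, F w ≠ 0 := by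
    by_contra hcon
    push_neg at hcon
    have h4 := hFeq x₁ y₀
    rw [hcon (x₁ * y₀), hcon (σ y₀ * x₁)] at h4
    have h5 : f x₁ * g y₀ = 0 := by linear_combination -h4 / 2
    exact hx₁ ((mul_eq_zero.mp h5).resolve_right hy₀)
  have hE : E ≠ 0 := by
    intro h0
    have hd := hdia x₃
    rw [h0, mul_zero] at hd
    exact mul_ne_zero hκ hx₃ hd
  refine ⟨E / κ, div_ne_zero hE hκ, fun x => ?_⟩
  rw [← hUF x, div_mul_eq_mul_div, eq_div_iff hκ]
  linear_combination hdia x
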